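/- Let Γ and Π be connected graphs and let ψ be a (λ,ε)-quasi-isometric embedding of the vertex set of Γ into the vertex set of Π. Then there exists a connected subgraph Λ of Π whose vertex set contains ψ(V(Γ)) such that: (i) ψ, regarded as a map from V(Γ) to V(Λ) with Λ carrying its intrinsic graph metric, is a quasi-isometry; (ii) the inclusion of V(Λ) into V(Π) is a quasi-isometric embedding; and (iii) if Γ has bounded valence then so does Λ. -/

import Mathlib

open SimpleGraph

namespace Paper

variable {V W : Type*}

/-- Locally finite graph: every vertex has finite degree. -/
def LocFin (G : SimpleGraph V) : Prop := ∀ v : V, (G.neighborSet v).Finite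

/-- All vertex degrees are at most `d`. -/
def DegLe (G : SimpleGraph V) (d : ℕ) : Prop :=
  ∀ v : V, (G.neighborSet v).Finite ∧ (G.neighborSet v).ncard ≤ d

/-- Bounded valence. -/
def BddVal (G : SimpleGraph V) : Prop := ∃ d : ℕ, DegLe G d

/-- `(l, e)`-quasi-isometric embedding between the vertex sets of two graphs. -/
def IsQIE (G : SimpleGraph V) (H : SimpleGraph W) (l e : ℝ) (f : V → W) : Prop :=
  ∀ x y : V,
    (G.dist x y : ℝ) / l - e ≤ (H.dist (f x) (f y) : ℝ) ∧
      (H.dist (f x) (f y) : ℝ) ≤ l * (G.dist x y : ℝ) + e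

/-- Coarse surjectivity: every vertex of the target lies within distance `e` of the image. -/
def CoarseSurj (H : SimpleGraph W) (e : ℝ) (f : V → W) : Prop :=
  ∀ w : W, ∃ x : V, (H.dist w (f x) : ℝ) ≤ e

/-- `(l, e)`-quasi-isometry. -/
def IsQI (G : SimpleGraph V) (H : SimpleGraph W) (l e : ℝ) (f : V → W) : Prop :=
  IsQIE G H l e f ∧ CoarseSurj H e f

/-- `g` is an `h`-quasi-inverse of `f`. -/
def IsQInv (G : SimpleGraph V) (h : ℝ) (f : V → W) (g : W → V) : Prop :=
  ∀ x : V, (G.dist (g (f x)) x : ℝ) ≤ h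

/-- Reachability by a walk all of whose vertices avoid the set `S`. -/
def ReachOut (G : SimpleGraph V) (S : Set V) (a b : V) : Prop :=
  ∃ w : G.Walk a b, ∀ v ∈ w.support, v ∉ S

/-- A one-way infinite simple ray. -/
def RayIn (G : SimpleGraph V) (r : ℕ → V) : Prop :=
  Function.Injective r ∧ ∀ n : ℕ, G.Adj (r n) (r (n + 1))

/-- End-equivalence of rays: for every finite vertex set they have tails in the same
connected component of the graph with that set deleted. -/
def EndEquiv (G : SimpleGraph V) (r₁ r₂ : ℕ → V) : Prop :=
  ∀ S : Set V, S.Finite → ∃ N : ℕ, ∀ m n : ℕ, N ≤ m → N ≤ n → ReachOut G S (r₁ m) (r₂ n)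

/-- Two points (encoded as sequences: a constant sequence for a vertex, a ray for an end)
lie in distinct connected components of `G` with the vertex set `S` deleted. -/
def SepComps (G : SimpleGraph V) (S : Set V) (a b : ℕ → V) : Prop :=
  ∃ N : ℕ,
    (∀ m n : ℕ, N ≤ m → N ≤ n → ReachOut G S (a m) (a n)) ∧
    (∀ m n : ℕ, N ≤ m → N ≤ n → ReachOut G S (b m) (b n)) ∧
    (∀ m n : ℕ, N ≤ m → N ≤ n → ¬ ReachOut G S (a m) (b n))

/-- `vs(G) ≥ N`: any vertex set separating two ends has at least `N` elements. -/
def VsGe (G : SimpleGraph V) (N : ℕ) : Prop :=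
  ∀ r₁ r₂ : ℕ → V, RayIn G r₁ → RayIn G r₂ →
    ∀ S : Set V, S.Finite → SepComps G S r₁ r₂ → N ≤ S.ncard

/-- `vs(G) ≥ c` for a real threshold `c`. -/
def VsGeR (G : SimpleGraph V) (c : ℝ) : Prop :=
  ∀ r₁ r₂ : ℕ → V, RayIn G r₁ → RayIn G r₂ →
    ∀ S : Set V, S.Finite → SepComps G S r₁ r₂ → c ≤ (S.ncard : ℝ)

/-- `U` is a connected component of `G` with the vertex set `A` deleted. -/
def IsCompOut (G : SimpleGraph V) (A U : Set V) : Prop :=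
  ∃ a ∈ U, ∀ b : V, ReachOut G A a b ↔ b ∈ U

/-- The edge coboundary `δb` of a vertex set `b`. -/
def cob (G : SimpleGraph V) (b : Set V) : Set (Sym2 V) :=
  {e | ∃ x y : V, e = s(x, y) ∧ G.Adj x y ∧ x ∈ b ∧ y ∉ b}

/-- Membership in the Boolean ring `𝓑G` of vertex sets with finite coboundary. -/
def MemBX (G : SimpleGraph V) (b : Set V) : Prop := (cob G b).Finite

/-- The set of endpoints of the edges of `δb`. -/
def cobVerts (G : SimpleGraph V) (b : Set V) : Set V :=
  {v | ∃ w : V, s(v, w) ∈ cob G b}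

/-- A tight element: both sides induce connected subgraphs. -/
def Tight (G : SimpleGraph V) (b : Set V) : Prop :=
  (G.induce b).Connected ∧ (G.induce bᶜ).Connected

/-- Vertices of `A` that are endpoints of an edge with the other endpoint in `U`. -/
def AttachSet (G : SimpleGraph V) (A U : Set V) : Set V :=
  {v | v ∈ A ∧ ∃ u ∈ U, G.Adj v u}

/-- `incut(A) ≤ k` for a vertex set `A`, with the intrinsic metric of `G.induce A`. -/
def IncutBddSet (G : SimpleGraph V) (A : Set V) (k : ℕ) : Prop :=
  ∀ U : Set V, IsCompOut G A U →
    ∀ v w : A, (v : V) ∈ AttachSet G A U → (w : V) ∈ AttachSet G A U →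
      (G.induce A).dist v w ≤ k

/-- `outcut(A) ≤ k` for a vertex set `A`. -/
def OutcutBddSet (G : SimpleGraph V) (A : Set V) (k : ℕ) : Prop :=
  ∀ U : Set V, IsCompOut G A U → IncutBddSet G U k

/-- Uniform coboundary for a vertex set. -/
def UnifCobSet (G : SimpleGraph V) (A : Set V) : Prop :=
  (∃ k : ℕ, IncutBddSet G A k) ∧ (∃ k : ℕ, OutcutBddSet G A k)

/-- `incut(L) ≤ k` for a subgraph `L`, with its own intrinsic metric. -/
def IncutBddSub (G : SimpleGraph V) (L : G.Subgraph) (k : ℕ) : Prop :=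
  ∀ U : Set V, IsCompOut G L.verts U →
    ∀ v w : L.verts, (v : V) ∈ AttachSet G L.verts U → (w : V) ∈ AttachSet G L.verts U →
      L.coe.dist v w ≤ k

/-- `outcut(L) ≤ k` for a subgraph `L`. -/
def OutcutBddSub (G : SimpleGraph V) (L : G.Subgraph) (k : ℕ) : Prop :=
  ∀ U : Set V, IsCompOut G L.verts U → IncutBddSet G U k

/-- Uniform coboundary for a subgraph. -/
def UnifCobSub (G : SimpleGraph V) (L : G.Subgraph) : Prop :=
  (∃ k : ℕ, IncutBddSub G L k) ∧ (∃ k : ℕ, OutcutBddSub G L k)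

/-- Quasi-transitive graph: the automorphism group has finitely many orbits of vertices. -/
def QuasiTransitive (G : SimpleGraph V) : Prop :=
  ∃ F : Set V, F.Finite ∧ ∀ v : V, ∃ e : G ≃g G, ∃ w ∈ F, e w = v

/-- Hausdorff distance between two vertex sets is at most `r`. -/
def HausBdd (G : SimpleGraph V) (A B : Set V) (r : ℝ) : Prop :=
  (∀ a ∈ A, ∃ b ∈ B, (G.dist a b : ℝ) ≤ r) ∧ (∀ b ∈ B, ∃ a ∈ A, (G.dist a b : ℝ) ≤ r)

/-- Reachability by a walk avoiding the edge set `F`. -/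
def ReachAvoidE (G : SimpleGraph V) (F : Set (Sym2 V)) (a b : V) : Prop :=
  ∃ w : G.Walk a b, ∀ e ∈ w.edges, e ∉ F

/-- The ends of the rays `r₁`, `r₂` are separated by deleting the edge set `F`. -/
def SepEnds (G : SimpleGraph V) (F : Set (Sym2 V)) (r₁ r₂ : ℕ → V) : Prop :=
  ∃ N : ℕ, ∀ m n : ℕ, N ≤ m → N ≤ n → ¬ ReachAvoidE G F (r₁ m) (r₂ n)

/-- Accessibility: some `k ≥ 1` such that any two distinct ends can be separated by
deleting at most `k` edges. -/
def Accessible (G : SimpleGraph V) : Prop :=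
  ∃ k : ℕ, 1 ≤ k ∧ ∀ r₁ r₂ : ℕ → V, RayIn G r₁ → RayIn G r₂ → ¬ EndEquiv G r₁ r₂ →
    ∃ F : Set (Sym2 V), F.Finite ∧ F.ncard ≤ k ∧ SepEnds G F r₁ r₂

/-- `l`-quasi-action of a group on the vertex set of a graph. -/
def IsQAct {G₀ : Type*} [Group G₀] (G : SimpleGraph V) (l : ℝ) (φ : G₀ → V → V) : Prop :=
  (∀ g : G₀, IsQI G G l l (φ g)) ∧
  (∀ (g h : G₀) (x : V), (G.dist (φ (g * h) x) (φ g (φ h x)) : ℝ) ≤ l) ∧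
  (∀ g : G₀, IsQInv G l (φ g) (φ g⁻¹) ∧ IsQInv G l (φ g⁻¹) (φ g))

/-- `B`-cobounded quasi-action. -/
def Cobdd {G₀ : Type*} [Group G₀] (G : SimpleGraph V) (B : ℝ) (φ : G₀ → V → V) : Prop :=
  ∀ x y : V, ∃ g : G₀, (G.dist x (φ g y) : ℝ) ≤ B

/-- The diameter (in `ℕ`) of a vertex set. -/
noncomputable def setDiam (G : SimpleGraph V) (S : Set V) : ℕ :=
  sSup {d : ℕ | ∃ x ∈ S, ∃ y ∈ S, G.dist x y = d}

/-- 2-connected: connected, at least three vertices, and deleting any single vertex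
leaves it connected. -/
def TwoConnected (G : SimpleGraph V) : Prop :=
  G.Connected ∧ (∃ a b c : V, a ≠ b ∧ a ≠ c ∧ b ≠ c) ∧
    ∀ v : V, (G.induce {w : V | w ≠ v}).Connected

/-- Tree decomposition. -/
def IsTreeDecomp {VT : Type*} (X : SimpleGraph V) (T : SimpleGraph VT) (B : VT → Set V) :
    Prop :=
  T.IsTree ∧ (∀ x : V, ∃ u : VT, x ∈ B u) ∧
    ∀ u v w : VT, (∃ p : T.Walk u w, p.IsPath ∧ v ∈ p.support) → B u ∩ B w ⊆ B v

/-- Bounded adhesion. -/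
def BddAdhesion {VT : Type*} (T : SimpleGraph VT) (B : VT → Set V) : Prop :=
  ∃ N : ℕ, ∀ u w : VT, T.Adj u w → (B u ∩ B w).Finite ∧ (B u ∩ B w).ncard ≤ N

/-- Connected parts. -/
def ConnParts {VT : Type*} (X : SimpleGraph V) (B : VT → Set V) : Prop :=
  ∀ u : VT, (X.induce (B u)).Connected

/-- Replacing each bag by its closed `r`-neighbourhood. -/
def ballBag {VT : Type*} (X : SimpleGraph V) (B : VT → Set V) (r : ℕ) : VT → Set V :=
  fun u => {x : V | ∃ y ∈ B u, X.dist x y ≤ r}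

/-- A point of `G` which is either a vertex lying outside `B(S;R)` (encoded as a constant
sequence) or an end (encoded as a ray representing it). -/
def PtSeq (G : SimpleGraph V) (S : Set V) (R : ℝ) (a : ℕ → V) : Prop :=
  (∃ v : V, a = Function.const ℕ v ∧ ∀ s ∈ S, R < (G.dist v s : ℝ)) ∨ RayIn G a

/-- A subring of `𝓑G`: contains `∅`, and is closed under intersection and
symmetric difference. -/
def IsSubring (G : SimpleGraph V) (R : Set (Set V)) : Prop :=
  (∀ b ∈ R, MemBX G b) ∧ ∅ ∈ R ∧
    (∀ a ∈ R, ∀ b ∈ R, a ∩ b ∈ R) ∧ (∀ a ∈ R, ∀ b ∈ R, symmDiff a b ∈ R)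

/-- The subring generated by a family. -/
def genSubring (G : SimpleGraph V) (E : Set (Set V)) : Set (Set V) :=
  ⋂₀ {R : Set (Set V) | IsSubring G R ∧ E ⊆ R}

/-- Two vertex sets are nested. -/
def Nested (a b : Set V) : Prop :=
  a ∩ b = ∅ ∨ a ∩ bᶜ = ∅ ∨ aᶜ ∩ b = ∅ ∨ aᶜ ∩ bᶜ = ∅

/-- A nested family: closed under complementation and pairwise nested. -/
def NestedFam (E : Set (Set V)) : Prop :=
  (∀ b ∈ E, bᶜ ∈ E) ∧ ∀ a ∈ E, ∀ b ∈ E, Nested a b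

/-- A `G₀`-invariant family of vertex sets. -/
def GInvFam (G₀ : Type*) [Group G₀] [MulAction G₀ V] (E : Set (Set V)) : Prop :=
  ∀ g : G₀, ∀ b ∈ E, (fun x => g • x) '' b ∈ E

/-- A `G₀`-finite family of vertex sets: it meets only finitely many orbits. -/
def GFinFam (G₀ : Type*) [Group G₀] [MulAction G₀ V] (E : Set (Set V)) : Prop :=
  ∃ F : Set (Set V), F.Finite ∧ F ⊆ E ∧
    ∀ b ∈ E, ∃ g : G₀, ∃ c ∈ F, (fun x => g • x) '' c = b

/-- `g` stabilises the subgraph `L` setwise. -/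
def StabSub {G₀ : Type*} [Group G₀] [MulAction G₀ V] (G : SimpleGraph V) (g : G₀)
    (L : G.Subgraph) : Prop :=
  (∀ v : V, v ∈ L.verts ↔ g • v ∈ L.verts) ∧
    (∀ a b : V, L.Adj a b ↔ L.Adj (g • a) (g • b))

end Paper


section Stmt0Aux

open SimpleGraph

variable {V W : Type*}

private lemma aux_biUnion_card {ι α : Type*} (s : Finset ι) (t : ι → Set α) (k : ℕ)
    (ht : ∀ i ∈ s, (t i).Finite) (hk : ∀ i ∈ s, (t i).ncard ≤ k) :
    (⋃ i ∈ s, t i).Finite ∧ (⋃ i ∈ s, t i).ncard ≤ s.card * k := by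
  classical
  induction s using Finset.induction_on with
  | empty => simp
  | @insert a s ha ih =>
    have hta := ht a (Finset.mem_insert_self a s)
    obtain ⟨f1, c1⟩ := ih (fun i hi => ht i (Finset.mem_insert_of_mem hi))
      (fun i hi => hk i (Finset.mem_insert_of_mem hi))
    have hun : (⋃ i ∈ (insert a s : Finset ι), t i) = t a ∪ ⋃ i ∈ s, t i := by
      simp [Set.biUnion_insert]
    rw [hun]
    refine ⟨hta.union f1, ?_⟩
    calc (t a ∪ ⋃ i ∈ s, t i).ncard ≤ (t a).ncard + (⋃ i ∈ s, t i).ncard :=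
          Set.ncard_union_le _ _
      _ ≤ k + s.card * k := by
          have := hk a (Finset.mem_insert_self a s); omega
      _ = (insert a s).card * k := by
          rw [Finset.card_insert_of_notMem ha]; ring

private lemma aux_coe_walk {H : SimpleGraph W} {L : H.Subgraph} {u v : W}
    (w : H.Walk u v) :
    (∀ e ∈ w.edges, e ∈ L.edgeSet) → ∀ (hu : u ∈ L.verts) (hv : v ∈ L.verts),
    ∃ q : L.coe.Walk ⟨u, hu⟩ ⟨v, hv⟩, q.length = w.length := by
  induction w with
  | nil => intro _ hu hv; exact ⟨.nil, rfl⟩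
  | @cons a b c h p ih =>
    intro hw hu hv
    have hab : L.Adj a b := Subgraph.mem_edgeSet.1 (hw _ (by simp))
    obtain ⟨q, hq⟩ := ih (fun e he => hw e (List.mem_cons_of_mem _ he)) hab.snd_mem hv
    exact ⟨Walk.cons (by exact hab) q, congrArg (· + 1) hq⟩

private lemma aux_tail {G : SimpleGraph V} {y x : V} (w : G.Walk y x) {r : ℕ}
    (hw : w.length = r + 1) :
    ∃ z, G.Adj y z ∧ ∃ q : G.Walk z x, q.length = r := by
  cases w with
  | nil => simp at hw
  | cons h q => exact ⟨_, h, q, by simpa using hw⟩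

private lemma aux_step {G : SimpleGraph V} (hG : G.Connected) {x y : V} {r : ℕ}
    (h : G.dist x y ≤ r + 1) : G.dist x y ≤ r ∨ ∃ z, G.dist x z ≤ r ∧ G.Adj z y := by
  by_cases h' : G.dist x y ≤ r
  · exact Or.inl h'
  right
  have hd : G.dist x y = r + 1 := le_antisymm h (by omega)
  obtain ⟨p, hp⟩ := hG.exists_walk_length_eq_dist x y
  have hrev : p.reverse.length = r + 1 := by rw [Walk.length_reverse, hp, hd]
  obtain ⟨z, hyz, q, hq⟩ := aux_tail p.reverse hrev
  refine ⟨z, ?_, hyz.symm⟩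
  calc G.dist x z ≤ q.reverse.length := SimpleGraph.dist_le _
    _ = r := by rw [Walk.length_reverse, hq]

private lemma aux_ball {G : SimpleGraph V} (hG : G.Connected) {d : ℕ} (hd : Paper.DegLe G d)
    (x : V) (r : ℕ) :
    {y : V | G.dist x y ≤ r}.Finite ∧ {y : V | G.dist x y ≤ r}.ncard ≤ (d + 1) ^ r := by
  classical
  induction r with
  | zero =>
    have hset : {y : V | G.dist x y ≤ 0} = {x} := by
      ext y
      simp [Nat.le_zero, hG.dist_eq_zero_iff, eq_comm, Set.mem_singleton_iff]
    rw [hset]; simp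
  | succ r ih =>
    set F := ih.1.toFinset with hF
    have hsub : {y : V | G.dist x y ≤ r + 1} ⊆
        ⋃ z ∈ F, insert z (G.neighborSet z) := by
      intro y hy
      rcases aux_step hG hy with h | ⟨z, hz, ha⟩
      · exact Set.mem_iUnion₂.2 ⟨y, (ih.1.mem_toFinset).2 h, Set.mem_insert _ _⟩
      · exact Set.mem_iUnion₂.2 ⟨z, (ih.1.mem_toFinset).2 hz, Set.mem_insert_of_mem _ ha⟩
    obtain ⟨hfin, hcard⟩ := aux_biUnion_card F (fun z => insert z (G.neighborSet z)) (d + 1)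
      (fun z _ => ((hd z).1.insert z))
      (fun z _ => le_trans (Set.ncard_insert_le _ _) (by have := (hd z).2; omega))
    refine ⟨hfin.subset hsub, ?_⟩
    have hFc : F.card ≤ (d + 1) ^ r := by
      rw [hF, ← Set.ncard_eq_toFinset_card _ ih.1]
      exact ih.2
    calc {y : V | G.dist x y ≤ r + 1}.ncard
        ≤ (⋃ z ∈ F, insert z (G.neighborSet z)).ncard := Set.ncard_le_ncard hsub hfin
      _ ≤ F.card * (d + 1) := hcard
      _ ≤ (d + 1) ^ r * (d + 1) := Nat.mul_le_mul_right _ hFc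
      _ = (d + 1) ^ (r + 1) := by ring

end Stmt0Aux

open Paper in
theorem stmt0 {V W : Type*} (G : SimpleGraph V) (H : SimpleGraph W)
    (hG : G.Connected) (hH : H.Connected)
    (l e : ℝ) (hl : 1 ≤ l) (he : 0 ≤ e)
    (ψ : V → W) (hψ : IsQIE G H l e ψ) :
    ∃ L : H.Subgraph, L.coe.Connected ∧ (∀ x : V, ψ x ∈ L.verts) ∧
      (∃ (l' e' : ℝ) (f : V → L.verts), 1 ≤ l' ∧ 0 ≤ e' ∧
        (∀ x : V, (f x : W) = ψ x) ∧ IsQI G L.coe l' e' f) ∧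
      (∃ l' e' : ℝ, 1 ≤ l' ∧ 0 ≤ e' ∧
        IsQIE L.coe H l' e' (fun v => (v : W))) ∧
      (BddVal G → BddVal L.coe) := by
  classical
  obtain ⟨x₀⟩ := hG.nonempty
  have hl0 : (0 : ℝ) < l := lt_of_lt_of_le one_pos hl
  have hpex : ∀ x y : V, ∃ w : H.Walk (ψ x) (ψ y), w.length = H.dist (ψ x) (ψ y) :=
    fun x y => hH.exists_walk_length_eq_dist _ _
  choose p hp using hpex
  set n₀ : ℕ := ⌈l + e⌉₊ with hn₀def
  have hle_n₀ : l + e ≤ (n₀ : ℝ) := Nat.le_ceil _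
  have hn₀0 : (0 : ℝ) ≤ (n₀ : ℝ) := Nat.cast_nonneg _
  have hplenR : ∀ x y : V, G.Adj x y → ((p x y).length : ℝ) ≤ l + e := by
    intro x y hxy
    have h2 := (hψ x y).2
    have hd1 : G.dist x y = 1 := SimpleGraph.dist_eq_one_iff_adj.mpr hxy
    rw [hp x y]
    rw [hd1] at h2
    push_cast at h2 ⊢
    linarith
  have hplen : ∀ x y : V, G.Adj x y → (p x y).length ≤ n₀ := by
    intro x y hxy
    have h := (hplenR x y hxy).trans hle_n₀
    exact_mod_cast h
  let L : H.Subgraph :=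
    { verts := Set.range ψ ∪ ⋃ (x : V) (y : V) (_ : G.Adj x y), {w : W | w ∈ (p x y).support}
      Adj := fun a b => ∃ x y : V, G.Adj x y ∧ (p x y).toSubgraph.Adj a b
      adj_sub := by rintro a b ⟨x, y, hxy, h⟩; exact h.adj_sub
      edge_vert := by
        rintro a b ⟨x, y, hxy, h⟩
        refine Or.inr ?_
        simp only [Set.mem_iUnion]
        exact ⟨x, y, hxy, ((p x y).mem_verts_toSubgraph).1 h.fst_mem⟩
      symm := ⟨by rintro a b ⟨x, y, hxy, h⟩; exact ⟨x, y, hxy, h.symm⟩⟩ }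
  have hψv : ∀ x : V, ψ x ∈ L.verts := fun x => Or.inl ⟨x, rfl⟩
  have hsuppv : ∀ x y : V, G.Adj x y → ∀ w ∈ (p x y).support, w ∈ L.verts := by
    intro x y hxy w hw
    refine Or.inr ?_
    simp only [Set.mem_iUnion]
    exact ⟨x, y, hxy, hw⟩
  have hedge : ∀ x y : V, G.Adj x y → ∀ e' ∈ (p x y).edges, e' ∈ L.edgeSet := by
    intro x y hxy e' he'
    have h' : e' ∈ (p x y).toSubgraph.edgeSet := ((p x y).mem_edges_toSubgraph).2 he'
    induction e' with
    | _ a b => exact Subgraph.mem_edgeSet.2 ⟨x, y, hxy, Subgraph.mem_edgeSet.1 h'⟩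
  have himg1 : ∀ x y : V, G.Adj x y →
      ∃ q : L.coe.Walk ⟨ψ x, hψv x⟩ ⟨ψ y, hψv y⟩, q.length ≤ n₀ := by
    intro x y hxy
    obtain ⟨q, hq⟩ := aux_coe_walk (p x y) (hedge x y hxy) (hψv x) (hψv y)
    exact ⟨q, by rw [hq]; exact hplen x y hxy⟩
  have himgwalk : ∀ (x y : V) (w : G.Walk x y),
      ∃ q : L.coe.Walk ⟨ψ x, hψv x⟩ ⟨ψ y, hψv y⟩, q.length ≤ n₀ * w.length := by
    intro x y w
    induction w with
    | nil => exact ⟨.nil, by simp⟩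
    | @cons a b c h w' ih =>
      obtain ⟨q1, hq1⟩ := himg1 a b h
      obtain ⟨q2, hq2⟩ := ih
      refine ⟨q1.append q2, ?_⟩
      rw [Walk.length_append, Walk.length_cons]
      calc q1.length + q2.length ≤ n₀ + n₀ * w'.length := by omega
        _ = n₀ * (w'.length + 1) := by ring
  have hdistimg : ∀ x y : V,
      L.coe.dist ⟨ψ x, hψv x⟩ ⟨ψ y, hψv y⟩ ≤ n₀ * G.dist x y := by
    intro x y
    obtain ⟨w, hw⟩ := hG.exists_walk_length_eq_dist x y
    obtain ⟨q, hq⟩ := himgwalk x y w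
    calc L.coe.dist ⟨ψ x, hψv x⟩ ⟨ψ y, hψv y⟩ ≤ q.length := SimpleGraph.dist_le q
      _ ≤ n₀ * w.length := hq
      _ = n₀ * G.dist x y := by rw [hw]
  have hnear : ∀ v : L.verts, ∃ x : V,
      L.coe.Reachable v ⟨ψ x, hψv x⟩ ∧ L.coe.dist v ⟨ψ x, hψv x⟩ ≤ n₀ := by
    rintro ⟨v, hv⟩
    rcases hv with ⟨x, rfl⟩ | hv
    · refine ⟨x, Reachable.refl _, ?_⟩
      have h0 : L.coe.dist ⟨ψ x, hψv x⟩ ⟨ψ x, hψv x⟩ = 0 := SimpleGraph.dist_self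
      omega
    · simp only [Set.mem_iUnion] at hv
      obtain ⟨x, y, hxy, hsup⟩ := hv
      have hlen2 : ((p x y).dropUntil v hsup).length ≤ n₀ :=
        le_trans (Walk.length_dropUntil_le (p x y) hsup) (hplen x y hxy)
      obtain ⟨q, hq⟩ := aux_coe_walk ((p x y).dropUntil v hsup)
        (fun e' he' => hedge x y hxy e' (Walk.edges_dropUntil_subset (p x y) hsup he'))
        (hsuppv x y hxy v hsup) (hψv y)
      refine ⟨y, q.reachable, le_trans (SimpleGraph.dist_le q) ?_⟩
      rw [hq]; exact hlen2
  have hLconn : L.coe.Connected := by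
    rw [SimpleGraph.connected_iff_exists_forall_reachable]
    refine ⟨⟨ψ x₀, hψv x₀⟩, ?_⟩
    intro v
    obtain ⟨x, hr, _⟩ := hnear v
    obtain ⟨w⟩ := hG.preconnected x₀ x
    obtain ⟨q, _⟩ := himgwalk x₀ x w
    exact q.reachable.trans hr.symm
  have hdH : ∀ u v : L.verts, H.dist (u : W) (v : W) ≤ L.coe.dist u v := by
    intro u v
    obtain ⟨q, hq⟩ := hLconn.exists_walk_length_eq_dist u v
    calc H.dist (u : W) (v : W) ≤ (q.map L.hom).length := SimpleGraph.dist_le _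
      _ = q.length := Walk.length_map _ q
      _ = L.coe.dist u v := hq
  have hdHR : ∀ u v : L.verts, (H.dist (u : W) (v : W) : ℝ) ≤ (L.coe.dist u v : ℝ) :=
    fun u v => Nat.cast_le.2 (hdH u v)
  have hdistimgR : ∀ x y : V,
      (L.coe.dist ⟨ψ x, hψv x⟩ ⟨ψ y, hψv y⟩ : ℝ) ≤ (n₀ : ℝ) * G.dist x y := by
    intro x y
    exact_mod_cast hdistimg x y
  have hGlb : ∀ x y : V, (G.dist x y : ℝ) ≤ l * H.dist (ψ x) (ψ y) + l * e := by
    intro x y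
    have h1 := (hψ x y).1
    have h2 : (G.dist x y : ℝ) / l ≤ (H.dist (ψ x) (ψ y) : ℝ) + e := by linarith
    rw [div_le_iff₀ hl0] at h2
    calc (G.dist x y : ℝ) ≤ ((H.dist (ψ x) (ψ y) : ℝ) + e) * l := h2
      _ = l * H.dist (ψ x) (ψ y) + l * e := by ring
  have hrev : ∀ u v : L.verts, (L.coe.dist u v : ℝ) ≤
      ((n₀ : ℝ) * l) * H.dist (u : W) (v : W) +
        (2 * n₀ + (n₀ : ℝ) * l * (2 * n₀ + e)) := by
    intro u v
    obtain ⟨x, hxr, hx⟩ := hnear u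
    obtain ⟨y, hyr, hy⟩ := hnear v
    have t1 : L.coe.dist u v ≤ L.coe.dist u ⟨ψ x, hψv x⟩ +
        L.coe.dist ⟨ψ x, hψv x⟩ ⟨ψ y, hψv y⟩ + L.coe.dist ⟨ψ y, hψv y⟩ v := by
      have a1 := hLconn.dist_triangle (u := u) (v := ⟨ψ y, hψv y⟩) (w := v)
      have a2 := hLconn.dist_triangle (u := u) (v := ⟨ψ x, hψv x⟩) (w := ⟨ψ y, hψv y⟩)
      omega
    have t2 : H.dist (ψ x) (ψ y) ≤ H.dist (ψ x) (u : W) + H.dist (u : W) (v : W) +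
        H.dist (v : W) (ψ y) := by
      have a1 := hH.dist_triangle (u := ψ x) (v := (u : W)) (w := ψ y)
      have a2 := hH.dist_triangle (u := (u : W)) (v := (v : W)) (w := ψ y)
      omega
    have t3 : H.dist (ψ x) (u : W) ≤ n₀ := by
      rw [SimpleGraph.dist_comm]
      exact le_trans (hdH u ⟨ψ x, hψv x⟩) hx
    have t4 : H.dist (v : W) (ψ y) ≤ n₀ := by
      have h1 : L.coe.dist v ⟨ψ y, hψv y⟩ ≤ n₀ := hy
      exact le_trans (hdH v ⟨ψ y, hψv y⟩) h1
    have ht2R : (H.dist (ψ x) (ψ y) : ℝ) ≤ (H.dist (u : W) (v : W) : ℝ) + 2 * n₀ := by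
      have c2 : (H.dist (ψ x) (ψ y) : ℝ) ≤ (H.dist (ψ x) (u : W) : ℝ) +
          (H.dist (u : W) (v : W) : ℝ) + (H.dist (v : W) (ψ y) : ℝ) := by exact_mod_cast t2
      have c3 : (H.dist (ψ x) (u : W) : ℝ) ≤ (n₀ : ℝ) := by exact_mod_cast t3
      have c4 : (H.dist (v : W) (ψ y) : ℝ) ≤ (n₀ : ℝ) := by exact_mod_cast t4
      linarith
    have hGxy : (G.dist x y : ℝ) ≤ l * ((H.dist (u : W) (v : W) : ℝ) + 2 * n₀) + l * e := by
      have h1 := hGlb x y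
      nlinarith [mul_le_mul_of_nonneg_left ht2R hl0.le]
    have c1 : (L.coe.dist ⟨ψ x, hψv x⟩ ⟨ψ y, hψv y⟩ : ℝ) ≤
        (n₀ : ℝ) * (l * ((H.dist (u : W) (v : W) : ℝ) + 2 * n₀) + l * e) :=
      le_trans (hdistimgR x y) (mul_le_mul_of_nonneg_left hGxy hn₀0)
    have ct1 : (L.coe.dist u v : ℝ) ≤ (L.coe.dist u ⟨ψ x, hψv x⟩ : ℝ) +
        (L.coe.dist ⟨ψ x, hψv x⟩ ⟨ψ y, hψv y⟩ : ℝ) + (L.coe.dist ⟨ψ y, hψv y⟩ v : ℝ) := by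
      exact_mod_cast t1
    have cx : (L.coe.dist u ⟨ψ x, hψv x⟩ : ℝ) ≤ (n₀ : ℝ) := by exact_mod_cast hx
    have cy : (L.coe.dist ⟨ψ y, hψv y⟩ v : ℝ) ≤ (n₀ : ℝ) := by
      rw [SimpleGraph.dist_comm]
      exact_mod_cast hy
    nlinarith
  refine ⟨L, hLconn, hψv, ?_, ?_, ?_⟩
  · refine ⟨l + n₀, e + n₀, fun x => ⟨ψ x, hψv x⟩, by linarith, by linarith,
      fun x => rfl, ?_, ?_⟩
    · intro x y
      have hB : (0 : ℝ) ≤ (L.coe.dist ⟨ψ x, hψv x⟩ ⟨ψ y, hψv y⟩ : ℝ) := Nat.cast_nonneg _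
      have hHd : (0 : ℝ) ≤ (H.dist (ψ x) (ψ y) : ℝ) := Nat.cast_nonneg _
      have h2 := hdHR ⟨ψ x, hψv x⟩ ⟨ψ y, hψv y⟩
      constructor
      · have hpos : (0 : ℝ) < l + n₀ := by linarith
        rw [sub_le_iff_le_add, div_le_iff₀ hpos]
        have h3 := hGlb x y
        nlinarith [mul_le_mul_of_nonneg_left h2 hl0.le]
      · have h4 := hdistimgR x y
        have hG0 : (0 : ℝ) ≤ (G.dist x y : ℝ) := Nat.cast_nonneg _
        nlinarith
    · intro w
      obtain ⟨x, _, hx⟩ := hnear w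
      refine ⟨x, ?_⟩
      have : (L.coe.dist w ⟨ψ x, hψv x⟩ : ℝ) ≤ (n₀ : ℝ) := by exact_mod_cast hx
      linarith
  · refine ⟨(n₀ : ℝ) * l + 1, 2 * n₀ + (n₀ : ℝ) * l * (2 * n₀ + e), ?_, ?_, ?_⟩
    · nlinarith [mul_nonneg hn₀0 hl0.le]
    · nlinarith [mul_nonneg (mul_nonneg hn₀0 hl0.le)
        (by linarith : (0:ℝ) ≤ 2 * (n₀:ℝ) + e), hn₀0]
    · intro u v
      have hr := hrev u v
      have hB : (0 : ℝ) ≤ (H.dist (u : W) (v : W) : ℝ) := Nat.cast_nonneg _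
      have hA : (0 : ℝ) ≤ (L.coe.dist u v : ℝ) := Nat.cast_nonneg _
      have hd := hdHR u v
      have he2 : (0 : ℝ) ≤ 2 * n₀ + (n₀ : ℝ) * l * (2 * n₀ + e) := by
        nlinarith [mul_nonneg (mul_nonneg hn₀0 hl0.le)
          (by linarith : (0:ℝ) ≤ 2 * (n₀:ℝ) + e), hn₀0]
      constructor
      · have hpos : (0 : ℝ) < (n₀ : ℝ) * l + 1 := by
          nlinarith [mul_nonneg hn₀0 hl0.le]
        rw [sub_le_iff_le_add, div_le_iff₀ hpos]
        nlinarith [mul_nonneg (mul_nonneg hn₀0 hl0.le) he2,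
          mul_nonneg (mul_nonneg hn₀0 hl0.le) hB]
      · nlinarith [mul_nonneg (mul_nonneg hn₀0 hl0.le) hA]
  · rintro ⟨d, hd⟩
    set R : ℕ := ⌈l * (2 * (l + e) + e)⌉₊ with hRdef
    set M : ℕ := (d + 1) ^ R with hMdef
    have hT : ∀ v : W, {x : V | (H.dist (ψ x) v : ℝ) ≤ l + e}.Finite ∧
        {x : V | (H.dist (ψ x) v : ℝ) ≤ l + e}.ncard ≤ M := by
      intro v
      rcases Set.eq_empty_or_nonempty {x : V | (H.dist (ψ x) v : ℝ) ≤ l + e} with hemp | hne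
      · rw [hemp]; simp
      · obtain ⟨x₁, hx₁⟩ := hne
        have hsub : {x : V | (H.dist (ψ x) v : ℝ) ≤ l + e} ⊆ {y : V | G.dist x₁ y ≤ R} := by
          intro x hx
          have t2 : H.dist (ψ x₁) (ψ x) ≤ H.dist (ψ x₁) v + H.dist v (ψ x) :=
            hH.dist_triangle
          have c1 : (H.dist (ψ x₁) v : ℝ) ≤ l + e := hx₁
          have c2 : (H.dist v (ψ x) : ℝ) ≤ l + e := by
            rw [SimpleGraph.dist_comm]; exact hx
          have c3 : (H.dist (ψ x₁) (ψ x) : ℝ) ≤ 2 * (l + e) := by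
            have := (Nat.cast_le (α := ℝ)).2 t2
            push_cast at this
            linarith
          have c4 : (G.dist x₁ x : ℝ) ≤ l * (2 * (l + e) + e) := by
            have h1 := hGlb x₁ x
            nlinarith [mul_le_mul_of_nonneg_left c3 hl0.le]
          have c5 : (G.dist x₁ x : ℝ) ≤ (R : ℝ) := le_trans c4 (Nat.le_ceil _)
          exact_mod_cast c5
        obtain ⟨bf, bc⟩ := aux_ball hG hd x₁ R
        exact ⟨bf.subset hsub, le_trans (Set.ncard_le_ncard hsub bf) bc⟩
    have hsupp_fin : ∀ x y : V, {w : W | w ∈ (p x y).support}.Finite := by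
      intro x y
      rw [← List.coe_toFinset]
      exact (p x y).support.toFinset.finite_toSet
    have hsupp_card : ∀ x y : V, G.Adj x y →
        {w : W | w ∈ (p x y).support}.ncard ≤ n₀ + 1 := by
      intro x y hxy
      rw [← List.coe_toFinset, Set.ncard_coe_finset]
      calc (p x y).support.toFinset.card ≤ (p x y).support.length :=
            List.toFinset_card_le _
        _ = (p x y).length + 1 := Walk.length_support _
        _ ≤ n₀ + 1 := by have := hplen x y hxy; omega
    have hNS : ∀ v : W, {b : W | L.Adj v b}.Finite ∧
        {b : W | L.Adj v b}.ncard ≤ M * (d * (n₀ + 1)) := by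
      intro v
      set t : V → Set W := fun x => ⋃ y ∈ (hd x).1.toFinset, {w : W | w ∈ (p x y).support}
        with htdef
      have hinner : ∀ x : V, (t x).Finite ∧ (t x).ncard ≤ d * (n₀ + 1) := by
        intro x
        obtain ⟨f1, c1⟩ := aux_biUnion_card (hd x).1.toFinset
          (fun y => {w : W | w ∈ (p x y).support}) (n₀ + 1)
          (fun y _ => hsupp_fin x y)
          (fun y hy => hsupp_card x y ((hd x).1.mem_toFinset.1 hy))
        refine ⟨f1, le_trans c1 ?_⟩
        have : (hd x).1.toFinset.card ≤ d := by
          rw [← Set.ncard_eq_toFinset_card _ (hd x).1]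
          exact (hd x).2
        exact Nat.mul_le_mul_right _ this
      obtain ⟨f2, c2⟩ := aux_biUnion_card (hT v).1.toFinset t (d * (n₀ + 1))
        (fun x _ => (hinner x).1) (fun x _ => (hinner x).2)
      have hcov : {b : W | L.Adj v b} ⊆ ⋃ x ∈ (hT v).1.toFinset, t x := by
        rintro b ⟨x, y, hxy, hadj⟩
        have hvs : v ∈ (p x y).support := ((p x y).mem_verts_toSubgraph).1 hadj.fst_mem
        have hbs : b ∈ (p x y).support := ((p x y).mem_verts_toSubgraph).1 hadj.snd_mem
        have hxT : x ∈ (hT v).1.toFinset := by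
          rw [Set.Finite.mem_toFinset]
          show (H.dist (ψ x) v : ℝ) ≤ l + e
          have hd1 : H.dist (ψ x) v ≤ ((p x y).takeUntil v hvs).length :=
            SimpleGraph.dist_le _
          have hd2 : ((p x y).takeUntil v hvs).length ≤ (p x y).length :=
            Walk.length_takeUntil_le _ _
          have : (H.dist (ψ x) v : ℝ) ≤ ((p x y).length : ℝ) := by
            exact_mod_cast le_trans hd1 hd2
          exact le_trans this (hplenR x y hxy)
        refine Set.mem_iUnion₂.2 ⟨x, hxT, ?_⟩
        refine Set.mem_iUnion₂.2 ⟨y, ?_, hbs⟩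
        rw [Set.Finite.mem_toFinset]
        exact hxy
      have hMcard : (hT v).1.toFinset.card ≤ M := by
        rw [← Set.ncard_eq_toFinset_card _ (hT v).1]
        exact (hT v).2
      refine ⟨f2.subset hcov, ?_⟩
      calc {b : W | L.Adj v b}.ncard ≤ (⋃ x ∈ (hT v).1.toFinset, t x).ncard :=
            Set.ncard_le_ncard hcov f2
        _ ≤ (hT v).1.toFinset.card * (d * (n₀ + 1)) := c2
        _ ≤ M * (d * (n₀ + 1)) := Nat.mul_le_mul_right _ hMcard
    refine ⟨M * (d * (n₀ + 1)), fun v => ?_⟩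
    obtain ⟨kf, kc⟩ := hNS (v : W)
    have heq : L.coe.neighborSet v = Subtype.val ⁻¹' {b : W | L.Adj (v : W) b} := rfl
    constructor
    · rw [heq]
      exact Set.Finite.preimage Subtype.val_injective.injOn kf
    · rw [heq]
      calc (Subtype.val ⁻¹' {b : W | L.Adj (v : W) b}).ncard
          = (Subtype.val '' (Subtype.val ⁻¹' {b : W | L.Adj (v : W) b})).ncard :=
            (Set.ncard_image_of_injective _ Subtype.val_injective).symm
        _ ≤ {b : W | L.Adj (v : W) b}.ncard :=
            Set.ncard_le_ncard (Set.image_preimage_subset _ _) kf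
        _ ≤ M * (d * (n₀ + 1)) := kc
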